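/- With G as above (central extension of U by V with exp(G)=p, p odd) and ρ ∈ V^∨, λ ∈ Λ²U^∨, define the 3-cochain f_{ρ,λ} : G³ → Q/Z by f_{ρ,λ}(g₁,g₂,g₃) = (1/2)·ρ(g₁ s(ḡ₁)⁻¹)·λ(ḡ₂∧ḡ₃). Then its coboundary is df_{ρ,λ}(g₁,g₂,g₃,g₄) = -(1/4)·γ^∨(ρ)(ḡ₁∧ḡ₂)·λ(ḡ₃∧ḡ₄). -/

import Mathlib

/-- The group `ℚ/ℤ`. -/
abbrev QZ : Type := AddCircle (1 : ℚ)

/-- The embedding `𝔽_p = (1/p)ℤ/ℤ ⊆ ℚ/ℤ`. -/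
noncomputable def embQZ (p : ℕ) (a : ZMod p) : QZ := ((a.val : ℚ) / p : ℚ)

lemma embQZ_add (p : ℕ) [NeZero p] (a b : ZMod p) :
    embQZ p (a + b) = embQZ p a + embQZ p b := by
  unfold embQZ
  have hp : (p : ℚ) ≠ 0 := Nat.cast_ne_zero.mpr (NeZero.ne p)
  have h1 : (a + b).val + p * ((a.val + b.val) / p) = a.val + b.val := by
    rw [ZMod.val_add]; exact Nat.mod_add_div _ _
  set k := (a.val + b.val) / p with hk
  have h1q : (((a+b).val : ℚ)) + p * k = a.val + b.val := by
    exact_mod_cast congrArg (Nat.cast : ℕ → ℚ) h1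
  rw [← QuotientAddGroup.mk_add]
  have h2 : ((a.val : ℚ)) / p + (b.val : ℚ) / p = ((a+b).val : ℚ)/p + k := by
    rw [← add_div, ← h1q, add_div, mul_comm, mul_div_assoc, div_self hp, mul_one]
  rw [h2, QuotientAddGroup.mk_add]
  have : ((k : ℚ) : QZ) = 0 := by
    rw [AddCircle.coe_eq_zero_iff]
    exact ⟨k, by simp⟩
  rw [this, add_zero]

lemma embQZ_zero (p : ℕ) [NeZero p] : embQZ p 0 = 0 := by
  unfold embQZ; simp

lemma embQZ_neg (p : ℕ) [NeZero p] (a : ZMod p) : embQZ p (-a) = - embQZ p a := by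
  have := embQZ_add p a (-a)
  rw [add_neg_cancel, embQZ_zero] at this
  exact eq_neg_of_add_eq_zero_right this.symm

open scoped commutatorElement

/-- With `G` a central extension `0 → V → G → U → 0` of `𝔽_p`-vector spaces with
`exp(G) = p` (`p` odd), commutator map the alternating bilinear map `γb`, section `s` with
`s(u₂)s(u₁u₂)⁻¹s(u₁) = ½γ(u₁∧u₂)`, and for `ρ ∈ V^∨` and `λ ∈ Λ²U^∨` (given as the
alternating bilinear form `lb`), define the 3-cochain
`f_{ρ,λ}(g₁,g₂,g₃) = ½·ρ(g₁s(ḡ₁)⁻¹)·λ(ḡ₂∧ḡ₃)`.  Then its coboundary is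
`df_{ρ,λ}(g₁,g₂,g₃,g₄) = −¼·γ^∨(ρ)(ḡ₁∧ḡ₂)·λ(ḡ₃∧ḡ₄)`. -/
theorem stmt3 (p : ℕ) [Fact p.Prime] (hodd : Odd p)
    (U V : Type) [AddCommGroup U] [Module (ZMod p) U] [FiniteDimensional (ZMod p) U]
    [AddCommGroup V] [Module (ZMod p) V] [FiniteDimensional (ZMod p) V]
    (G : Type) [Group G]
    (π : G → U) (hπ : ∀ g₁ g₂, π (g₁ * g₂) = π g₁ + π g₂) (hπsurj : Function.Surjective π)
    (j : V → G) (hj : ∀ v₁ v₂, j (v₁ + v₂) = j v₁ * j v₂) (hjinj : Function.Injective j)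
    (hker : ∀ g : G, π g = 0 ↔ g ∈ Set.range j)
    (hcent : ∀ (v : V) (g : G), g * j v = j v * g)
    (hexp : ∀ g : G, g ^ p = 1)
    (γb : U →ₗ[ZMod p] U →ₗ[ZMod p] V)
    (hγalt : ∀ u : U, γb u u = 0)
    (hcomm : ∀ g₁ g₂ : G, ⁅g₁, g₂⁆ = j (γb (π g₁) (π g₂)))
    (s : U → G) (hs : ∀ u, π (s u) = u)
    (hsec : ∀ u₁ u₂ : U, s u₂ * (s (u₁ + u₂))⁻¹ * s u₁ = j ((2 : ZMod p)⁻¹ • γb u₁ u₂))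
    (r : G → V) (hr : ∀ g : G, j (r g) = g * (s (π g))⁻¹)
    (ρ : V →ₗ[ZMod p] ZMod p)
    (lb : U →ₗ[ZMod p] U →ₗ[ZMod p] ZMod p) (hlalt : ∀ u : U, lb u u = 0)
    (f : G → G → G → QZ)
    (hdef : ∀ g₁ g₂ g₃ : G,
      f g₁ g₂ g₃ = embQZ p ((2 : ZMod p)⁻¹ * ρ (r g₁) * lb (π g₂) (π g₃))) :
    ∀ g₁ g₂ g₃ g₄ : G,
      f g₂ g₃ g₄ - f (g₁ * g₂) g₃ g₄ + f g₁ (g₂ * g₃) g₄ - f g₁ g₂ (g₃ * g₄) + f g₁ g₂ g₃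
        = embQZ p (-((2 : ZMod p)⁻¹ * (2 : ZMod p)⁻¹)
            * ρ (γb (π g₁) (π g₂)) * lb (π g₃) (π g₄)) := by
  haveI : NeZero p := ⟨(Fact.out : p.Prime).ne_zero⟩
  intro g₁ g₂ g₃ g₄
  have hg : ∀ g : G, g = j (r g) * s (π g) := by
    intro g
    rw [hr g, inv_mul_cancel_right]
  have hmid : ∀ u₁ u₂ : U, s u₁ * s u₂ * (s (u₁ + u₂))⁻¹
      = j ((2 : ZMod p)⁻¹ • γb u₁ u₂) := by
    intro u₁ u₂
    have h1 : s u₁ * s u₂ * (s (u₁ + u₂))⁻¹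
        = s u₁ * (s u₂ * (s (u₁ + u₂))⁻¹ * s u₁) * (s u₁)⁻¹ := by group
    rw [h1, hsec u₁ u₂, hcent, mul_inv_cancel_right]
  have key : r (g₁ * g₂) = r g₁ + r g₂ + (2 : ZMod p)⁻¹ • γb (π g₁) (π g₂) := by
    apply hjinj
    rw [hr, hj, hj]
    calc g₁ * g₂ * (s (π (g₁ * g₂)))⁻¹
        = (j (r g₁) * s (π g₁)) * (j (r g₂) * s (π g₂)) * (s (π g₁ + π g₂))⁻¹ := by
          rw [← hg g₁, ← hg g₂, hπ g₁ g₂]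
      _ = j (r g₁) * (s (π g₁) * j (r g₂)) * s (π g₂) * (s (π g₁ + π g₂))⁻¹ := by group
      _ = j (r g₁) * (j (r g₂) * s (π g₁)) * s (π g₂) * (s (π g₁ + π g₂))⁻¹ := by
          rw [hcent (r g₂) (s (π g₁))]
      _ = j (r g₁) * j (r g₂) * (s (π g₁) * s (π g₂) * (s (π g₁ + π g₂))⁻¹) := by group
      _ = j (r g₁) * j (r g₂) * j ((2 : ZMod p)⁻¹ • γb (π g₁) (π g₂)) := by
          rw [hmid]
  rw [hdef, hdef, hdef, hdef, hdef, sub_eq_add_neg, sub_eq_add_neg, ← embQZ_neg,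
    ← embQZ_neg, ← embQZ_add, ← embQZ_add, ← embQZ_add, ← embQZ_add]
  congr 1
  rw [key, hπ g₂ g₃, hπ g₃ g₄]
  simp only [map_add, LinearMap.add_apply, map_smul, smul_eq_mul]
  ring
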